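/- Let A ∈ M_m(ℂ) and B ∈ M_n(ℂ) be Hermitian. The Cayley transform U_{A⊗B} can be written as C ⊗ D for some C ∈ M_m(ℂ), D ∈ M_n(ℂ) if and only if one of the following holds: (a) A has exactly one eigenvalue; (b) B has exactly one eigenvalue; (c) A has exactly two eigenvalues a₁, a₂ and B has exactly two eigenvalues b₁, b₂ with a₁a₂b₁b₂ = 1. -/

import Mathlib

open Matrix Kronecker Complex

noncomputable def cayley {n : Type*} [Fintype n] [DecidableEq n]
    (A : Matrix n n ℂ) : Matrix n n ℂ :=
  (A - Complex.I • 1) * (A + Complex.I • 1)⁻¹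

noncomputable def ff (t : ℝ) : ℂ := ((t : ℂ) - Complex.I) * ((t : ℂ) + Complex.I)⁻¹

lemma denom_ne (t : ℝ) : (t : ℂ) + Complex.I ≠ 0 := by
  intro h
  have := congrArg Complex.im h
  simp at this

lemma ff_ne (t : ℝ) : ff t ≠ 0 := by
  have h1 : (t : ℂ) - Complex.I ≠ 0 := by
    intro h; have := congrArg Complex.im h; simp at this
  exact mul_ne_zero h1 (inv_ne_zero (denom_ne t))

lemma ff_eq_div (t : ℝ) : ff t = ((t:ℂ) - Complex.I)/((t:ℂ)+Complex.I) :=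
  (div_eq_mul_inv _ _).symm

lemma ff_mul_ff (x y : ℝ) :
    ff x * ff y = (((x*y - 1 : ℝ) : ℂ) - Complex.I * ((x + y : ℝ) : ℂ)) /
      (((x*y - 1 : ℝ) : ℂ) + Complex.I * ((x + y : ℝ) : ℂ)) := by
  rw [ff_eq_div, ff_eq_div, div_mul_div_comm]
  congr 1 <;> push_cast <;> linear_combination Complex.I_sq

lemma denom2_ne (x y : ℝ) :
    ((x*y - 1 : ℝ) : ℂ) + Complex.I * ((x + y : ℝ) : ℂ) ≠ 0 := by
  have h : ((x*y - 1 : ℝ) : ℂ) + Complex.I * ((x + y : ℝ) : ℂ)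
      = ((x:ℂ) + Complex.I) * ((y:ℂ) + Complex.I) := by
    push_cast; linear_combination -Complex.I_sq
  rw [h]
  exact mul_ne_zero (denom_ne x) (denom_ne y)

lemma prod_form (P S T : ℝ) :
    ((P:ℂ) - Complex.I*S) * ((P:ℂ) + Complex.I*T)
      = ((P*P + S*T : ℝ) : ℂ) + ((P*(T-S) : ℝ) : ℂ) * Complex.I := by
  push_cast
  linear_combination (-(S:ℂ)*T) * Complex.I_sq

lemma quot_iff (P S T : ℝ) (hS : ((P:ℂ) + Complex.I*S) ≠ 0)
    (hT : ((P:ℂ) + Complex.I*T) ≠ 0) :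
    ((P:ℂ) - Complex.I*S)/((P:ℂ)+Complex.I*S) = ((P:ℂ)-Complex.I*T)/((P:ℂ)+Complex.I*T)
      ↔ P*(S-T) = 0 := by
  rw [div_eq_div_iff hS hT, prod_form, prod_form]
  constructor
  · intro h
    have h2 := congrArg Complex.im h
    simp at h2
    rcases h2 with h3 | h3
    · have hst : S = T := by linarith
      rw [hst]; ring
    · rw [h3]; ring
  · intro h
    have h1 : P*(T-S) = 0 := by linarith
    have h2 : P*(S-T) = 0 := h
    rw [h1, h2]
    norm_num [mul_comm]

lemma key_iff (a a' b b' : ℝ) :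
    ff (a*b) * ff (a'*b') = ff (a*b') * ff (a'*b) ↔
      (a*a'*b*b' - 1)*(a-a')*(b-b') = 0 := by
  rw [ff_mul_ff, ff_mul_ff]
  have e1 : (a*b)*(a'*b') - 1 = a*a'*b*b' - 1 := by ring
  have e2 : (a*b')*(a'*b) - 1 = a*a'*b*b' - 1 := by ring
  rw [e1, e2, quot_iff _ _ _ (e1 ▸ denom2_ne (a*b) (a'*b')) (e2 ▸ denom2_ne (a*b') (a'*b))]
  constructor <;> intro h <;> linear_combination h

lemma cayley_conj {k : Type*} [Fintype k] [DecidableEq k] (V W M : Matrix k k ℂ)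
    (h1 : V * W = 1) (h2 : W * V = 1) :
    cayley (V * M * W) = V * cayley M * W := by
  have hW : W⁻¹ = V := Matrix.inv_eq_right_inv h2
  have hV : V⁻¹ = W := Matrix.inv_eq_right_inv h1
  have e : ∀ z : ℂ, V * M * W + z • 1 = V * (M + z • 1) * W := by
    intro z
    rw [Matrix.mul_add, Matrix.add_mul]
    congr 1
    rw [mul_smul_comm, smul_mul_assoc, mul_one, h1]
  have e' : V * M * W - Complex.I • 1 = V * (M - Complex.I • 1) * W := by
    rw [sub_eq_add_neg, sub_eq_add_neg, ← neg_smul, e]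
  unfold cayley
  rw [e', e, Matrix.mul_inv_rev, Matrix.mul_inv_rev, hW, hV]
  simp only [mul_assoc]
  rw [← mul_assoc W V, h2, one_mul]

lemma inv_diag {k : Type*} [Fintype k] [DecidableEq k] (w : k → ℂ) (hw : ∀ i, w i ≠ 0) :
    (diagonal w)⁻¹ = diagonal (fun i => (w i)⁻¹) := by
  apply Matrix.inv_eq_right_inv
  rw [diagonal_mul_diagonal]
  ext i j
  rcases eq_or_ne i j with rfl | h
  · simp [mul_inv_cancel₀ (hw i), Matrix.one_apply_eq]
  · simp [diagonal_apply_ne _ h, Matrix.one_apply_ne h]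

lemma diag_sub_smul_one {k : Type*} [Fintype k] [DecidableEq k] (v : k → ℂ) (z : ℂ) :
    diagonal v - z • 1 = diagonal (fun i => v i - z) := by
  ext i j
  rcases eq_or_ne i j with rfl | h
  · simp
  · simp [Matrix.one_apply_ne h, diagonal_apply_ne _ h]

lemma diag_add_smul_one {k : Type*} [Fintype k] [DecidableEq k] (v : k → ℂ) (z : ℂ) :
    diagonal v + z • 1 = diagonal (fun i => v i + z) := by
  ext i j
  rcases eq_or_ne i j with rfl | h
  · simp
  · simp [Matrix.one_apply_ne h, diagonal_apply_ne _ h]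

lemma cayley_diag {k : Type*} [Fintype k] [DecidableEq k] (r : k → ℝ) :
    cayley (diagonal (fun i => (r i : ℂ))) = diagonal (fun i => ff (r i)) := by
  unfold cayley
  rw [diag_sub_smul_one, diag_add_smul_one, inv_diag _ (fun i => denom_ne (r i)),
    diagonal_mul_diagonal]
  rfl

lemma helper2 (a₁ a₂ b₁ b₂ x x' y y' : ℝ) (hx : x = a₁ ∨ x = a₂)
    (hx' : x' = a₁ ∨ x' = a₂) (hy : y = b₁ ∨ y = b₂) (hy' : y' = b₁ ∨ y' = b₂)
    (hp : a₁*a₂*b₁*b₂ = 1) : (x*x'*y*y' - 1)*(x-x')*(y-y') = 0 := by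
  rcases hx with rfl | rfl <;> rcases hx' with rfl | rfl <;>
    rcases hy with rfl | rfl <;> rcases hy' with rfl | rfl <;>
    first
      | ring1
      | linear_combination ((x-x')*(y-y')) * hp

lemma of_prod (x y z : ℝ) (h : x*y*z = 0) (hy : y ≠ 0) (hz : z ≠ 0) : x = 0 := by
  rcases mul_eq_zero.mp h with h' | h'
  · rcases mul_eq_zero.mp h' with h'' | h''
    · exact h''
    · exact absurd h'' hy
  · exact absurd h' hz

lemma main_equiv {m n : ℕ} (α : Fin m → ℝ) (β : Fin n → ℝ)
    (P : Matrix (Fin m) (Fin m) ℂ) (Q : Matrix (Fin n) (Fin n) ℂ)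
    (hP1 : P * star P = 1) (hP2 : star P * P = 1)
    (hQ1 : Q * star Q = 1) (hQ2 : star Q * Q = 1)
    (A : Matrix (Fin m) (Fin m) ℂ) (B : Matrix (Fin n) (Fin n) ℂ)
    (hAspec : A = P * diagonal (fun i => (α i : ℂ)) * star P)
    (hBspec : B = Q * diagonal (fun j => (β j : ℂ)) * star Q) :
    (∃ (C : Matrix (Fin m) (Fin m) ℂ) (D : Matrix (Fin n) (Fin n) ℂ),
        cayley (A ⊗ₖ B) = C ⊗ₖ D) ↔
      ∃ (c : Fin m → ℂ) (d : Fin n → ℂ), ∀ i j, ff (α i * β j) = c i * d j := by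
  have hVW : (P ⊗ₖ Q) * ((star P) ⊗ₖ (star Q)) = 1 := by
    rw [← Matrix.mul_kronecker_mul, hP1, hQ1, Matrix.one_kronecker_one]
  have hWV : ((star P) ⊗ₖ (star Q)) * (P ⊗ₖ Q) = 1 := by
    rw [← Matrix.mul_kronecker_mul, hP2, hQ2, Matrix.one_kronecker_one]
  have hAkB : A ⊗ₖ B = (P ⊗ₖ Q) *
      diagonal (fun p : Fin m × Fin n => ((α p.1 * β p.2 : ℝ) : ℂ)) * ((star P) ⊗ₖ (star Q)) := by
    rw [hAspec, hBspec, Matrix.mul_kronecker_mul, Matrix.mul_kronecker_mul,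
      Matrix.diagonal_kronecker_diagonal]
    congr 2
    funext p
    push_cast
    ring
  have key : cayley (A ⊗ₖ B) = (P ⊗ₖ Q) *
      diagonal (fun p : Fin m × Fin n => ff (α p.1 * β p.2)) * ((star P) ⊗ₖ (star Q)) := by
    rw [hAkB, cayley_conj _ _ _ hVW hWV,
      cayley_diag (fun p : Fin m × Fin n => α p.1 * β p.2)]
  constructor
  · rintro ⟨C, D, hCD⟩
    refine ⟨fun i => (star P * C * P) i i, fun j => (star Q * D * Q) j j, fun i j => ?_⟩
    have h3 : (P ⊗ₖ Q) * diagonal (fun p : Fin m × Fin n => ff (α p.1 * β p.2)) *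
        ((star P) ⊗ₖ (star Q)) = C ⊗ₖ D := by rw [← key, hCD]
    have hd : diagonal (fun p : Fin m × Fin n => ff (α p.1 * β p.2))
        = (star P * C * P) ⊗ₖ (star Q * D * Q) := by
      have e1 : ((star P) ⊗ₖ (star Q)) * ((P ⊗ₖ Q) *
            diagonal (fun p : Fin m × Fin n => ff (α p.1 * β p.2)) *
            ((star P) ⊗ₖ (star Q))) * (P ⊗ₖ Q)
          = diagonal (fun p : Fin m × Fin n => ff (α p.1 * β p.2)) := by
        have e2 : ∀ X : Matrix (Fin m × Fin n) (Fin m × Fin n) ℂ,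
            ((star P) ⊗ₖ (star Q)) * ((P ⊗ₖ Q) * X * ((star P) ⊗ₖ (star Q))) * (P ⊗ₖ Q)
              = (((star P) ⊗ₖ (star Q)) * (P ⊗ₖ Q)) * X *
                (((star P) ⊗ₖ (star Q)) * (P ⊗ₖ Q)) := by
          intro X; simp only [mul_assoc]
        rw [e2, hWV, one_mul, mul_one]
      rw [← e1, h3, ← Matrix.mul_kronecker_mul, ← Matrix.mul_kronecker_mul]
    have := congrFun (congrFun hd (i, j)) (i, j)
    simpa [Matrix.kroneckerMap_apply] using this
  · rintro ⟨c, d, hcd⟩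
    refine ⟨P * diagonal c * star P, Q * diagonal d * star Q, ?_⟩
    rw [key, Matrix.mul_kronecker_mul, Matrix.mul_kronecker_mul,
      Matrix.diagonal_kronecker_diagonal]
    have hfun : (fun p : Fin m × Fin n => ff (α p.1 * β p.2))
        = fun mn : Fin m × Fin n => c mn.1 * d mn.2 := funext fun p => hcd p.1 p.2
    rw [hfun]

lemma fact_iff_Q {m n : ℕ} (hm : 0 < m) (hn : 0 < n) (α : Fin m → ℝ) (β : Fin n → ℝ) :
    (∃ (c : Fin m → ℂ) (d : Fin n → ℂ), ∀ i j, ff (α i * β j) = c i * d j) ↔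
      ∀ i i' j j', (α i * α i' * β j * β j' - 1) * (α i - α i') * (β j - β j') = 0 := by
  constructor
  · rintro ⟨c, d, h⟩ i i' j j'
    rw [← key_iff, h, h, h, h]
    ring
  · intro h
    have i0 : Fin m := ⟨0, hm⟩
    have j0 : Fin n := ⟨0, hn⟩
    refine ⟨fun i => ff (α i * β j0), fun j => ff (α i0 * β j) * (ff (α i0 * β j0))⁻¹,
      fun i j => ?_⟩
    have hL := (key_iff (α i) (α i0) (β j) (β j0)).mpr (h i i0 j j0)
    have h0 : ff (α i0 * β j0) ≠ 0 := ff_ne _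
    show ff (α i * β j) = ff (α i * β j0) * (ff (α i0 * β j) * (ff (α i0 * β j0))⁻¹)
    rw [eq_comm, ← mul_assoc, mul_inv_eq_iff_eq_mul₀ h0]
    linear_combination -hL

lemma Q_iff_rhs {m n : ℕ} (hm : 0 < m) (hn : 0 < n) (α : Fin m → ℝ) (β : Fin n → ℝ) :
    (∀ i i' j j', (α i * α i' * β j * β j' - 1) * (α i - α i') * (β j - β j') = 0) ↔
      ((∃ a, Set.range α = {a}) ∨ (∃ b, Set.range β = {b}) ∨
       (∃ a₁ a₂ b₁ b₂ : ℝ, a₁ ≠ a₂ ∧ b₁ ≠ b₂ ∧ Set.range α = {a₁, a₂} ∧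
         Set.range β = {b₁, b₂} ∧ a₁ * a₂ * b₁ * b₂ = 1)) := by
  have i0 : Fin m := ⟨0, hm⟩
  have j0 : Fin n := ⟨0, hn⟩
  constructor
  · intro h
    by_cases hac : ∀ i i', α i = α i'
    · refine Or.inl ⟨α i0, ?_⟩
      ext x
      simp only [Set.mem_range, Set.mem_singleton_iff]
      exact ⟨fun ⟨i, hi⟩ => by rw [← hi]; exact hac i i0, fun hx => ⟨i0, hx.symm⟩⟩
    by_cases hbc : ∀ j j', β j = β j'
    · refine Or.inr (Or.inl ⟨β j0, ?_⟩)
      ext x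
      simp only [Set.mem_range, Set.mem_singleton_iff]
      exact ⟨fun ⟨j, hj⟩ => by rw [← hj]; exact hbc j j0, fun hx => ⟨j0, hx.symm⟩⟩
    push_neg at hac hbc
    obtain ⟨i₁, i₂, hi⟩ := hac
    obtain ⟨j₁, j₂, hj⟩ := hbc
    have hprod : α i₁ * α i₂ * β j₁ * β j₂ = 1 := by
      have h0 := h i₁ i₂ j₁ j₂
      have := of_prod _ _ _ h0 (sub_ne_zero.mpr hi) (sub_ne_zero.mpr hj)
      linarith
    have hα1 : α i₁ ≠ 0 := fun h0 => one_ne_zero (α := ℝ)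
      (by rw [← hprod]; linear_combination (α i₂ * β j₁ * β j₂) * h0)
    have hα2 : α i₂ ≠ 0 := fun h0 => one_ne_zero (α := ℝ)
      (by rw [← hprod]; linear_combination (α i₁ * β j₁ * β j₂) * h0)
    have hβ1 : β j₁ ≠ 0 := fun h0 => one_ne_zero (α := ℝ)
      (by rw [← hprod]; linear_combination (α i₁ * α i₂ * β j₂) * h0)
    have hβ2 : β j₂ ≠ 0 := fun h0 => one_ne_zero (α := ℝ)
      (by rw [← hprod]; linear_combination (α i₁ * α i₂ * β j₁) * h0)
    have hrangeα : Set.range α = {α i₁, α i₂} := by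
      ext x
      simp only [Set.mem_range, Set.mem_insert_iff, Set.mem_singleton_iff]
      constructor
      · rintro ⟨i, rfl⟩
        by_contra hcon
        push_neg at hcon
        obtain ⟨h1, h2⟩ := hcon
        have e1 : α i * α i₂ * β j₁ * β j₂ = 1 := by
          have h0 := h i i₂ j₁ j₂
          have := of_prod _ _ _ h0 (sub_ne_zero.mpr h2) (sub_ne_zero.mpr hj)
          linarith
        have e2 : (α i - α i₁) * (α i₂ * (β j₁ * β j₂)) = 0 := by
          linear_combination e1 - hprod
        rcases mul_eq_zero.mp e2 with h' | h'
        · exact absurd (sub_eq_zero.mp h') h1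
        · exact absurd h' (mul_ne_zero hα2 (mul_ne_zero hβ1 hβ2))
      · rintro (rfl | rfl)
        exacts [⟨i₁, rfl⟩, ⟨i₂, rfl⟩]
    have hrangeβ : Set.range β = {β j₁, β j₂} := by
      ext x
      simp only [Set.mem_range, Set.mem_insert_iff, Set.mem_singleton_iff]
      constructor
      · rintro ⟨j, rfl⟩
        by_contra hcon
        push_neg at hcon
        obtain ⟨h1, h2⟩ := hcon
        have e1 : α i₁ * α i₂ * β j * β j₂ = 1 := by
          have h0 := h i₁ i₂ j j₂
          have := of_prod _ _ _ h0 (sub_ne_zero.mpr hi) (sub_ne_zero.mpr h2)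
          linarith
        have e2 : (β j - β j₁) * (α i₁ * (α i₂ * β j₂)) = 0 := by
          linear_combination e1 - hprod
        rcases mul_eq_zero.mp e2 with h' | h'
        · exact absurd (sub_eq_zero.mp h') h1
        · exact absurd h' (mul_ne_zero hα1 (mul_ne_zero hα2 hβ2))
      · rintro (rfl | rfl)
        exacts [⟨j₁, rfl⟩, ⟨j₂, rfl⟩]
    exact Or.inr (Or.inr ⟨α i₁, α i₂, β j₁, β j₂, hi, hj, hrangeα, hrangeβ, hprod⟩)
  · rintro (⟨a, ha⟩ | ⟨b, hb⟩ | ⟨a₁, a₂, b₁, b₂, _, _, hrA, hrB, hp⟩) i i' j j'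
    · have h1 : α i = a := by
        have : α i ∈ Set.range α := ⟨i, rfl⟩
        rw [ha] at this; simpa using this
      have h2 : α i' = a := by
        have : α i' ∈ Set.range α := ⟨i', rfl⟩
        rw [ha] at this; simpa using this
      rw [h1, h2]; ring
    · have h1 : β j = b := by
        have : β j ∈ Set.range β := ⟨j, rfl⟩
        rw [hb] at this; simpa using this
      have h2 : β j' = b := by
        have : β j' ∈ Set.range β := ⟨j', rfl⟩
        rw [hb] at this; simpa using this
      rw [h1, h2]; ring
    · have hi1 : α i = a₁ ∨ α i = a₂ := by
        have : α i ∈ Set.range α := ⟨i, rfl⟩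
        rw [hrA] at this; simpa using this
      have hi2 : α i' = a₁ ∨ α i' = a₂ := by
        have : α i' ∈ Set.range α := ⟨i', rfl⟩
        rw [hrA] at this; simpa using this
      have hj1 : β j = b₁ ∨ β j = b₂ := by
        have : β j ∈ Set.range β := ⟨j, rfl⟩
        rw [hrB] at this; simpa using this
      have hj2 : β j' = b₁ ∨ β j' = b₂ := by
        have : β j' ∈ Set.range β := ⟨j', rfl⟩
        rw [hrB] at this; simpa using this
      exact helper2 a₁ a₂ b₁ b₂ _ _ _ _ hi1 hi2 hj1 hj2 hp

theorem stmt_14 {m n : ℕ} (hm : 0 < m) (hn : 0 < n)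
    (A : Matrix (Fin m) (Fin m) ℂ) (B : Matrix (Fin n) (Fin n) ℂ)
    (hA : A.IsHermitian) (hB : B.IsHermitian) :
    (∃ (C : Matrix (Fin m) (Fin m) ℂ) (D : Matrix (Fin n) (Fin n) ℂ),
        cayley (A ⊗ₖ B) = C ⊗ₖ D) ↔
      (∃ a : ℝ, spectrum ℝ A = {a}) ∨
      (∃ b : ℝ, spectrum ℝ B = {b}) ∨
      (∃ a₁ a₂ b₁ b₂ : ℝ, a₁ ≠ a₂ ∧ b₁ ≠ b₂ ∧
        spectrum ℝ A = {a₁, a₂} ∧ spectrum ℝ B = {b₁, b₂} ∧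
        a₁ * a₂ * b₁ * b₂ = 1) := by
  rw [hA.spectrum_real_eq_range_eigenvalues, hB.spectrum_real_eq_range_eigenvalues]
  rw [main_equiv hA.eigenvalues hB.eigenvalues
    (hA.eigenvectorUnitary : Matrix (Fin m) (Fin m) ℂ)
    (hB.eigenvectorUnitary : Matrix (Fin n) (Fin n) ℂ)
    (Matrix.mem_unitaryGroup_iff.mp hA.eigenvectorUnitary.2)
    (Matrix.mem_unitaryGroup_iff'.mp hA.eigenvectorUnitary.2)
    (Matrix.mem_unitaryGroup_iff.mp hB.eigenvectorUnitary.2)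
    (Matrix.mem_unitaryGroup_iff'.mp hB.eigenvectorUnitary.2)
    A B hA.spectral_theorem hB.spectral_theorem]
  rw [fact_iff_Q hm hn, Q_iff_rhs hm hn]
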